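/- Let (Zₜ)_{t∈[0,T]} be an adapted process such that t ↦ e^{Kt}|Zₜ|² is a submartingale under a probability Q, and suppose the conditional BMO bound E^Q[∫ₜᵀ |Zₛ|² ds | ℱₜ] ≤ 4A holds a.s. for some A ≥ 0 and all t. Then |Zₜ|² ≤ 4KA/(1 − e^{−K(T−t)}) almost surely for each t < T. -/

import Mathlib

open MeasureTheory Set

/-- Abstract scheme of Theorem 3.7: if `e^{Kt}|Zₜ|²` is a submartingale under `Q`
and the conditional BMO bound `E^Q[∫ₜᵀ |Zₛ|² ds | ℱₜ] ≤ 4A` holds, then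
`|Zₜ|² ≤ 4KA/(1 - e^{-K(T-t)})` a.s. for each `t < T`. -/
theorem gradient_bound_from_bmo_and_submartingale {Ω : Type*} {m0 : MeasurableSpace Ω}
    {Q : Measure Ω} [IsProbabilityMeasure Q] (ℱ : Filtration ℝ m0)
    (m : ℕ) (Z : ℝ → Ω → EuclideanSpace ℝ (Fin m)) (K A T : ℝ)
    (hK : 0 < K) (hA : 0 ≤ A) (hT : 0 < T)
    (hmeas : Measurable (Function.uncurry Z))
    (hint : Integrable (fun ω => ∫ s in (0:ℝ)..T, ‖Z s ω‖ ^ 2) Q)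
    (hsub : Submartingale (fun t ω => Real.exp (K * t) * ‖Z t ω‖ ^ 2) ℱ Q)
    (hbmo : ∀ t ∈ Icc (0:ℝ) T,
      ∀ᵐ ω ∂Q, (Q[(fun ω => ∫ s in t..T, ‖Z s ω‖ ^ 2) | ℱ t]) ω ≤ 4 * A) :
    ∀ t, 0 ≤ t → t < T →
      ∀ᵐ ω ∂Q, ‖Z t ω‖ ^ 2 ≤ 4 * K * A / (1 - Real.exp (-(K * (T - t)))) := by
  intro t ht htT
  have htT' : t ≤ T := htT.le
  have hDpos : (0:ℝ) < 1 - Real.exp (-(K * (T - t))) := by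
    have : Real.exp (-(K * (T - t))) < 1 := by
      rw [Real.exp_lt_one_iff]
      nlinarith
    linarith
  set D : ℝ := 1 - Real.exp (-(K * (T - t))) with hD
  set b : ℝ := 4 * K * A / D with hb
  have hbnonneg : 0 ≤ b := by positivity
  -- integrability of each slice
  have hZint : ∀ s : ℝ, Integrable (fun ω => ‖Z s ω‖ ^ 2) Q := by
    intro s
    have h1 := (hsub.integrable s).const_mul (Real.exp (-(K * s)))
    refine h1.congr (Filter.Eventually.of_forall fun ω => ?_)
    simp only [← mul_assoc, ← Real.exp_add]
    simp
  -- monotonicity of second moments on [t,T]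
  set M : ℝ := ∫ ω, Real.exp (K * T) * ‖Z T ω‖ ^ 2 ∂Q with hM
  have hMbound : ∀ s ∈ Icc t T, ∫ ω, ‖Z s ω‖ ^ 2 ∂Q ≤ M := by
    intro s hs
    have h1 : ∫ ω in univ, Real.exp (K * s) * ‖Z s ω‖ ^ 2 ∂Q ≤
        ∫ ω in univ, Real.exp (K * T) * ‖Z T ω‖ ^ 2 ∂Q :=
      hsub.setIntegral_le hs.2 (MeasurableSet.univ)
    simp only [Measure.restrict_univ] at h1
    rw [integral_const_mul] at h1
    have hs1 : (1:ℝ) ≤ Real.exp (K * s) := by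
      rw [Real.one_le_exp_iff]
      nlinarith [hs.1]
    have hnn : 0 ≤ ∫ ω, ‖Z s ω‖ ^ 2 ∂Q :=
      integral_nonneg fun ω => by positivity
    nlinarith
  -- joint integrability on (Ioc t T) × Ω
  have hmeas2 : Measurable (fun p : ℝ × Ω => ‖Z p.1 p.2‖ ^ 2) := by
    have : (fun p : ℝ × Ω => ‖Z p.1 p.2‖ ^ 2) =
        fun p : ℝ × Ω => ‖Function.uncurry Z p‖ ^ 2 := rfl
    rw [this]
    exact hmeas.norm.pow_const 2
  have hprod : Integrable (fun p : ℝ × Ω => ‖Z p.1 p.2‖ ^ 2)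
      ((volume.restrict (Ioc t T)).prod Q) := by
    refine ⟨hmeas2.aestronglyMeasurable, ?_⟩
    unfold HasFiniteIntegral
    rw [lintegral_prod _ (hmeas2.enorm.aemeasurable)]
    have hbd : ∀ s ∈ Ioc t T,
        (∫⁻ ω, (‖‖Z s ω‖ ^ 2‖₊ : ENNReal) ∂Q) ≤ ENNReal.ofReal M := by
      intro s hs
      have heq : (∫⁻ ω, (‖‖Z s ω‖ ^ 2‖₊ : ENNReal) ∂Q) =
          ENNReal.ofReal (∫ ω, ‖Z s ω‖ ^ 2 ∂Q) := by
        rw [ofReal_integral_eq_lintegral_ofReal (hZint s)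
          (Filter.Eventually.of_forall fun ω => by positivity)]
        refine lintegral_congr fun ω => ?_
        rw [← enorm_eq_nnnorm, Real.enorm_eq_ofReal (by positivity)]
      rw [heq]
      exact ENNReal.ofReal_le_ofReal (hMbound s ⟨hs.1.le, hs.2⟩)
    calc ∫⁻ s in Ioc t T, ∫⁻ ω, (‖‖Z s ω‖ ^ 2‖₊ : ENNReal) ∂Q
        ≤ ∫⁻ _ in Ioc t T, ENNReal.ofReal M := by
          exact setLIntegral_mono' measurableSet_Ioc hbd
      _ = ENNReal.ofReal M * volume (Ioc t T) := by
          rw [setLIntegral_const, mul_comm]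
      _ < ⊤ := by
          refine ENNReal.mul_lt_top ENNReal.ofReal_lt_top ?_
          simp [Real.volume_Ioc]
  -- integrability of ω ↦ ∫_t^T |Z_s(ω)|² ds
  have hGint : Integrable (fun ω => ∫ s in Ioc t T, ‖Z s ω‖ ^ 2) Q :=
    hprod.integral_prod_right
  have hGeq : (fun ω => ∫ s in t..T, ‖Z s ω‖ ^ 2) =
      (fun ω => ∫ s in Ioc t T, ‖Z s ω‖ ^ 2) := by
    funext ω; exact intervalIntegral.integral_of_le htT'
  -- the key quantitative estimate for sets in ℱ t
  have key : ∀ E : Set Ω, MeasurableSet[ℱ t] E →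
      D / K * ∫ ω in E, ‖Z t ω‖ ^ 2 ∂Q ≤ 4 * A * (Q E).toReal := by
    intro E hE
    have hE0 : MeasurableSet E := ℱ.le t E hE
    set It : ℝ := ∫ ω in E, ‖Z t ω‖ ^ 2 ∂Q with hIt
    -- submartingale estimate
    have hA1 : ∀ s ∈ Icc t T,
        Real.exp (K * (t - s)) * It ≤ ∫ ω in E, ‖Z s ω‖ ^ 2 ∂Q := by
      intro s hs
      have h := hsub.setIntegral_le hs.1 hE
      rw [integral_const_mul, integral_const_mul] at h
      have hps : (0:ℝ) < Real.exp (K * s) := Real.exp_pos _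
      rw [← hIt] at h
      rw [show K * (t - s) = K * t - K * s by ring, Real.exp_sub,
        div_mul_eq_mul_div, div_le_iff₀ hps]
      linarith [h]
    -- restricted product integrability
    have hprodE : Integrable (fun p : ℝ × Ω => ‖Z p.1 p.2‖ ^ 2)
        ((volume.restrict (Ioc t T)).prod (Q.restrict E)) := by
      have heq : ((volume.restrict (Ioc t T)).prod (Q.restrict E)) =
          ((volume.restrict (Ioc t T)).prod Q).restrict (univ ×ˢ E) := by
        rw [← Measure.prod_restrict, Measure.restrict_univ]
      rw [heq]
      exact hprod.restrict
    -- Fubini swap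
    have hswap : ∫ s in Ioc t T, (∫ ω in E, ‖Z s ω‖ ^ 2 ∂Q) =
        ∫ ω in E, (∫ s in Ioc t T, ‖Z s ω‖ ^ 2) ∂Q := by
      exact
        integral_integral_swap (f := fun s ω => ‖Z s ω‖ ^ 2)
          (μ := volume.restrict (Ioc t T)) (ν := Q.restrict E) hprodE
    -- integrability of s ↦ ∫_E |Z_s|² dQ on (t, T]
    have hgInt : IntegrableOn (fun s => ∫ ω in E, ‖Z s ω‖ ^ 2 ∂Q) (Ioc t T) volume :=
      hprodE.integral_prod_left
    -- lower bound the iterated integral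
    have hlower : (∫ s in Ioc t T, Real.exp (K * (t - s)) * It) ≤
        ∫ s in Ioc t T, (∫ ω in E, ‖Z s ω‖ ^ 2 ∂Q) := by
      have hcont : Continuous fun s : ℝ => Real.exp (K * (t - s)) * It :=
        (Real.continuous_exp.comp (continuous_const.mul (continuous_const.sub continuous_id))).mul continuous_const
      exact setIntegral_mono_on hcont.integrableOn_Ioc hgInt measurableSet_Ioc
        fun s hs => hA1 s ⟨hs.1.le, hs.2⟩
    -- compute the exponential integral
    have hcalc : (∫ s in Ioc t T, Real.exp (K * (t - s))) = D / K := by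
      rw [← intervalIntegral.integral_of_le htT']
      have hF : ∀ s ∈ Icc t T, HasDerivAt (fun s => -Real.exp (K * (t - s)) / K)
          (Real.exp (K * (t - s))) s := by
        intro s _
        have h1 : HasDerivAt (fun s : ℝ => K * (t - s)) (-K) s := by
          simpa using ((hasDerivAt_id s).const_sub t).const_mul K
        have h2 : HasDerivAt (fun s => Real.exp (K * (t - s)))
            (Real.exp (K * (t - s)) * (-K)) s := h1.exp
        have hKne : K ≠ 0 := ne_of_gt hK
        have h4 := (h2.neg).div_const K
        have h5 : -(Real.exp (K * (t - s)) * -K) / K = Real.exp (K * (t - s)) := by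
          rw [mul_neg, neg_neg, mul_div_assoc, div_self hKne, mul_one]
        rwa [h5] at h4
      have hcont : Continuous fun s : ℝ => Real.exp (K * (t - s)) :=
        Real.continuous_exp.comp (continuous_const.mul (continuous_const.sub continuous_id))
      rw [intervalIntegral.integral_eq_sub_of_hasDerivAt
        (fun s hs => hF s (by rwa [Set.uIcc_of_le htT'] at hs))
        (hcont.intervalIntegrable t T)]
      have : K * (t - t) = 0 := by ring
      rw [show K * (t - T) = -(K * (T - t)) by ring, this, Real.exp_zero]
      field_simp [hD]
      ring
    have hexpInt : (∫ s in Ioc t T, Real.exp (K * (t - s)) * It) = D / K * It := by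
      rw [integral_mul_const, hcalc]
    -- conditional expectation bound
    have hce : ∫ ω in E, (∫ s in Ioc t T, ‖Z s ω‖ ^ 2) ∂Q ≤ 4 * A * (Q E).toReal := by
      have hsi := (setIntegral_condExp (ℱ.le t) (hGeq ▸ hGint) hE
        (f := fun ω => ∫ s in t..T, ‖Z s ω‖ ^ 2))
      have hbnd := hbmo t ⟨ht, htT'⟩
      have hmono : ∫ ω in E, (Q[(fun ω => ∫ s in t..T, ‖Z s ω‖ ^ 2) | ℱ t]) ω ∂Q ≤
          ∫ _ω in E, (4 * A) ∂Q :=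
        integral_mono_ae integrable_condExp.restrict (integrable_const _)
          (ae_restrict_of_ae hbnd)
      rw [setIntegral_const, smul_eq_mul, mul_comm, measureReal_def] at hmono
      calc ∫ ω in E, (∫ s in Ioc t T, ‖Z s ω‖ ^ 2) ∂Q
          = ∫ ω in E, (∫ s in t..T, ‖Z s ω‖ ^ 2) ∂Q := by rw [hGeq]
        _ = ∫ ω in E, (Q[(fun ω => ∫ s in t..T, ‖Z s ω‖ ^ 2) | ℱ t]) ω ∂Q := hsi.symm
        _ ≤ 4 * A * (Q E).toReal := hmono
    calc D / K * It = ∫ s in Ioc t T, Real.exp (K * (t - s)) * It := hexpInt.symm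
      _ ≤ ∫ s in Ioc t T, (∫ ω in E, ‖Z s ω‖ ^ 2 ∂Q) := hlower
      _ = ∫ ω in E, (∫ s in Ioc t T, ‖Z s ω‖ ^ 2) ∂Q := hswap
      _ ≤ 4 * A * (Q E).toReal := hce
  -- apply key to E = {|Z_t|² > b}
  have hft : StronglyMeasurable[ℱ t] (fun ω => ‖Z t ω‖ ^ 2) := by
    have h1 := hsub.1 t
    have h2 := h1.const_smul (Real.exp (-(K * t)))
    have heq : (Real.exp (-(K * t)) •
        fun ω => Real.exp (K * t) * ‖Z t ω‖ ^ 2) = fun ω => ‖Z t ω‖ ^ 2 := by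
      funext ω
      simp only [Pi.smul_apply, smul_eq_mul, ← mul_assoc, ← Real.exp_add]
      simp
    rwa [heq] at h2
  set E : Set Ω := {ω | b < ‖Z t ω‖ ^ 2} with hEdef
  have hE : MeasurableSet[ℱ t] E := measurableSet_lt measurable_const hft.measurable
  have hE0 : MeasurableSet E := ℱ.le t E hE
  have hkey := key E hE
  have hlow : b * (Q E).toReal ≤ ∫ ω in E, ‖Z t ω‖ ^ 2 ∂Q := by
    have h := setIntegral_mono_on (integrable_const b).integrableOn
      (hZint t).integrableOn hE0 (fun ω hω => (le_of_lt hω))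
    rwa [setIntegral_const, smul_eq_mul, mul_comm, measureReal_def] at h
  have h4A : 4 * A * (Q E).toReal = D / K * (b * (Q E).toReal) := by
    rw [hb]; field_simp
  have heqI : ∫ ω in E, ‖Z t ω‖ ^ 2 ∂Q = b * (Q E).toReal := by
    have hDK : (0:ℝ) < D / K := by positivity
    have h1 : D / K * ∫ ω in E, ‖Z t ω‖ ^ 2 ∂Q ≤ D / K * (b * (Q E).toReal) := by
      rw [← h4A]; exact hkey
    have h2 := le_of_mul_le_mul_left h1 hDK
    linarith
  -- conclude a.e. bound
  have hzero : ∫ ω in E, (‖Z t ω‖ ^ 2 - b) ∂Q = 0 := by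
    rw [integral_sub (hZint t).restrict (integrable_const b), setIntegral_const,
      smul_eq_mul, mul_comm, heqI, measureReal_def, sub_self]
  have hnn : 0 ≤ᵐ[Q.restrict E] fun ω => ‖Z t ω‖ ^ 2 - b := by
    refine (ae_restrict_iff' hE0).mpr (Filter.Eventually.of_forall fun ω hω => ?_)
    have : b < ‖Z t ω‖ ^ 2 := hω
    simp only [Pi.zero_apply]
    linarith
  have hae0 : (fun ω => ‖Z t ω‖ ^ 2 - b) =ᵐ[Q.restrict E] 0 :=
    (integral_eq_zero_iff_of_nonneg_ae hnn
      ((hZint t).sub (integrable_const b)).restrict).mp hzero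
  have hfinal : ∀ᵐ ω ∂Q, ω ∈ E → ‖Z t ω‖ ^ 2 - b = 0 :=
    (ae_restrict_iff' hE0).mp hae0
  filter_upwards [hfinal] with ω hω
  by_contra hc
  push_neg at hc
  have hωE : ω ∈ E := hc
  have := hω hωE
  have hlt : b < ‖Z t ω‖ ^ 2 := hωE
  linarith
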